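/- arXiv:2502.00478 — 2 statements merged into one kernel-verified Lean document; each statement's English description precedes it below -/
import Mathlib

section
/- Fix n ≥ 1, a complex parameter q with |q| < 1, and inhomogeneity parameters a_1,…,a_{n-1}, b_1,…,b_{n-1} ∈ ℂ with |a_i| < 1 and |b_i| < 1 for all i. For any partition λ = (λ_1 ≥ ⋯ ≥ λ_n) with λ_n > 0, the spin q-Whittaker polynomials satisfy the shift property 𝕗_{(λ_1,…,λ_n)}(x_1,…,x_n | a, b) = (x_1 ⋯ x_n) · 𝕗_{(λ_1−1,…,λ_n−1)}(x_1,…,x_n | a, b). -/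
open scoped BigOperators

noncomputable section SpinQW

/-- Finite `q`-Pochhammer symbol `(z;q)_n` with integer index `n`. -/
def qPochInt (q z : ℂ) (n : ℤ) : ℂ :=
  if 0 ≤ n then ∏ i ∈ Finset.range n.toNat, (1 - z * q ^ i)
  else (∏ i ∈ Finset.range (-n).toNat, (1 - z * q ^ (n + (i : ℤ))))⁻¹

/-- Infinite `q`-Pochhammer symbol `(z;q)_∞`. -/
def qPochInf (q z : ℂ) : ℂ := ∏' i : ℕ, (1 - z * q ^ i)

/-- Extension of a `Fin n`-tuple of naturals by zero. -/
def extN {n m : ℕ} (f : Fin n → Fin m) : ℕ → ℕ :=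
  fun i => if h : i < n then (f ⟨i, h⟩ : ℕ) else 0

/-- Extension of a `Fin n`-tuple of complex numbers by `1`. -/
def extC {n : ℕ} (z : Fin n → ℂ) : ℕ → ℂ :=
  fun i => if h : i < n then z ⟨i, h⟩ else 1

/-- Interlacing relation `μ ≼ λ` between partitions (0-based indexing). -/
def Interlaces (mu lam : ℕ → ℕ) : Prop := ∀ i, mu i ≤ lam i ∧ lam (i + 1) ≤ mu i

open Classical in
/-- Skew spin `q`-Whittaker polynomial `𝔽_{λ/μ}(x | a_1,…,a_n, b_1,…,b_n)`
(0-based indexing of parameters and parts). -/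
def skewF (q : ℂ) (n : ℕ) (a b : ℕ → ℂ) (lam mu : ℕ → ℕ) (x : ℂ) : ℂ :=
  if Interlaces mu lam then
    x ^ (∑ i ∈ Finset.range n, (lam i - mu i))
      * ∏ r ∈ Finset.range n,
          qPochInt q (a r / x) ((lam r : ℤ) - (mu r : ℤ))
            * qPochInt q (x * b r) ((mu r : ℤ) - (lam (r + 1) : ℤ))
            * qPochInt q q ((lam r : ℤ) - (lam (r + 1) : ℤ))
            / (qPochInt q q ((lam r : ℤ) - (mu r : ℤ))
                * qPochInt q q ((mu r : ℤ) - (lam (r + 1) : ℤ))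
                * qPochInt q (a r * b r) ((lam r : ℤ) - (lam (r + 1) : ℤ)))
  else 0

open Classical in
/-- The `n`-variate spin `q`-Whittaker polynomial `𝔽_λ(x_1,…,x_n | a, b)`,
defined through the branching rule. -/
def Fpoly (q : ℂ) : ℕ → (ℕ → ℂ) → (ℕ → ℂ) → (ℕ → ℕ) → (ℕ → ℂ) → ℂ
  | 0, _, _, lam, _ => if ∀ i, lam i = 0 then 1 else 0
  | n + 1, a, b, lam, x =>
      ∑ m : Fin n → Fin (lam 0 + 1),
        Fpoly q n (fun i => a (i + 1)) b (extN m) x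
          * skewF q (n + 1) a b lam (extN m) (x n)

/-- The spin `q`-Whittaker polynomial `𝕗_λ(x_1,…,x_n | a_1,…,a_{n-1}, b_1,…,b_{n-1})`,
i.e. `𝔽_λ` with the parameter `a_n` set to `0`. -/
def fpoly (q : ℂ) (n : ℕ) (a b : ℕ → ℂ) (lam : ℕ → ℕ) (x : ℕ → ℂ) : ℂ :=
  Fpoly q n (fun i => if i = n - 1 then 0 else a i) b lam x

/-- `ψ_λ(a_1,…,a_m, b_1,…,b_m)`. -/
def psiP (q : ℂ) (m : ℕ) (a b : ℕ → ℂ) (lam : ℕ → ℕ) : ℂ :=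
  ∏ r ∈ Finset.range m,
    qPochInt q (a r * b r) ((lam r : ℤ) - (lam (r + 1) : ℤ))
      / qPochInt q q ((lam r : ℤ) - (lam (r + 1) : ℤ))

/-- `H_q(x_1,…,x_N; y_1,…,y_M) = ∏ 1/(x_i y_j;q)_∞`. -/
def Hq (q : ℂ) (N M : ℕ) (x y : ℕ → ℂ) : ℂ :=
  ∏ i ∈ Finset.range N, ∏ j ∈ Finset.range M, (qPochInf q (x i * y j))⁻¹

/-- `E(x_1,…,x_N; y_1,…,y_M) = ∏ (1 + x_i y_j)`. -/
def Efn (N M : ℕ) (x y : ℕ → ℂ) : ℂ :=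
  ∏ i ∈ Finset.range N, ∏ j ∈ Finset.range M, (1 + x i * y j)

/-- The density `Δ(z_1,…,z_n)`. -/
def DeltaPlain (q : ℂ) (n : ℕ) (z : ℕ → ℂ) : ℂ :=
  (n.factorial : ℂ)⁻¹
    * (∏ i ∈ Finset.range n, ∏ j ∈ Finset.range n,
        if i = j then 1 else qPochInf q (z i / z j))
    * ∏ i ∈ Finset.range n, (2 * (Real.pi : ℂ) * Complex.I * z i)⁻¹

/-- The density `Δ(z_1,…,z_n | a_1,…,a_{n-1}, b_1,…,b_{n-1})`. -/
def DeltaAB (q : ℂ) (n : ℕ) (a b : ℕ → ℂ) (z : ℕ → ℂ) : ℂ :=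
  Hq q n (n - 1) (fun i => (z i)⁻¹) a * Hq q n (n - 1) z b
    * (∏ k ∈ Finset.range (n - 1), qPochInf q (a k * b k))
    / Hq q (n - 1) (n - 1) a b * DeltaPlain q n z

/-- The torus scalar product `⟪f | g⟫_n` with density `Δ(z | a, b)`:
the first slot is evaluated at `z`, the second at the inverses `z̄`. -/
def sprod (q : ℂ) (n : ℕ) (a b : ℕ → ℂ) (f g : (ℕ → ℂ) → ℂ) : ℂ :=
  torusIntegral
    (fun z : Fin n → ℂ =>
      f (extC z) * g (fun i => (extC z i)⁻¹) * DeltaAB q n a b (extC z))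
    0 (fun _ => 1)

/-- The norm constant `c_n(λ | a, b)`. -/
def cnorm (q : ℂ) (n : ℕ) (a b : ℕ → ℂ) (lam : ℕ → ℕ) : ℂ :=
  ∏ k ∈ Finset.range (n - 1),
    qPochInf q (a k * b k) / qPochInf q q
      * (qPochInt q q ((lam k : ℤ) - (lam (k + 1) : ℤ))
          / qPochInt q (a k * b k) ((lam k : ℤ) - (lam (k + 1) : ℤ)))

/-- Number of nonzero parts among the first `m` parts. -/
def ellLen (m : ℕ) (lam : ℕ → ℕ) : ℕ := ((Finset.range m).filter fun i => lam i ≠ 0).card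

/-- Conjugate (transposed) partition, counting parts among the first `m`. -/
def conjP (m : ℕ) (lam : ℕ → ℕ) : ℕ → ℕ :=
  fun i => ((Finset.range m).filter fun j => i + 1 ≤ lam j).card

/-- `φ_k(u | a, b)` entering the spin Hall–Littlewood functions. -/
def phiHL (q : ℂ) (a b : ℕ → ℂ) (k : ℕ) (u : ℂ) : ℂ :=
  (-1 : ℂ) ^ k * (u / (1 - a (k - 1) * u))
    * ∏ j ∈ Finset.range (k - 1), (u - b j) / (1 - a j * u)

/-- Variables permuted by `σ ∈ S_m`. -/
def permVar (m : ℕ) (σ : Equiv.Perm (Fin m)) (u : ℕ → ℂ) : ℕ → ℂ :=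
  fun i => if h : i < m then u ((σ ⟨i, h⟩ : Fin m) : ℕ) else u i

/-- The spin Hall–Littlewood rational function `F̄_λ(u_1,…,u_m | a, b)`. -/
def FbarHL (q : ℂ) (m : ℕ) (a b : ℕ → ℂ) (lam : ℕ → ℕ) (u : ℕ → ℂ) : ℂ :=
  (1 - q) ^ m / qPochInt q q ((m - ellLen m lam : ℕ) : ℤ)
    * psiP q (lam 0) a b (conjP m lam)
    * ∑ σ : Equiv.Perm (Fin m),
        (∏ α ∈ Finset.range m, ∏ β ∈ Finset.range m,
            if α < β then
              (permVar m σ u α - q * permVar m σ u β)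
                / (permVar m σ u α - permVar m σ u β)
            else 1)
          * ∏ i ∈ Finset.range (ellLen m lam), phiHL q a b (lam i) (permVar m σ u i)

/-- The `q`-difference operator `𝔇_{c_1,…,c_{n-1}}`. -/
def Dop (q : ℂ) (n : ℕ) (c : ℕ → ℂ) (f : (ℕ → ℂ) → ℂ) (x : ℕ → ℂ) : ℂ :=
  ∑ i ∈ Finset.range n,
    (∏ r ∈ Finset.range (n - 1), (1 - x i * c r))
      * (∏ j ∈ Finset.range n, if j = i then 1 else (1 - x i / x j)⁻¹)
      * f (Function.update x i (q * x i))

/-- The conjugate `q`-difference operator `𝔇̄_{c_1,…,c_{n-1}}`. -/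
def Dbarop (q : ℂ) (n : ℕ) (c : ℕ → ℂ) (f : (ℕ → ℂ) → ℂ) (x : ℕ → ℂ) : ℂ :=
  ∑ i ∈ Finset.range n,
    (∏ r ∈ Finset.range (n - 1), (1 - c r / x i))
      * (∏ j ∈ Finset.range n, if j = i then 1 else (1 - x j / x i)⁻¹)
      * f (Function.update x i (q⁻¹ * x i))

open Classical in
/-- Single-variable skew spin `q`-Whittaker Laurent polynomial for signatures
(`λ` of length `n`, `μ` of length `n-1`). -/
def skewfZ (q : ℂ) (n : ℕ) (a b : ℕ → ℂ) (lam mu : ℕ → ℤ) (x : ℂ) : ℂ :=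
  if ∀ i, i < n - 1 → mu i ≤ lam i ∧ lam (i + 1) ≤ mu i then
    x ^ ((∑ i ∈ Finset.range n, lam i) - ∑ i ∈ Finset.range (n - 1), mu i)
      * ∏ r ∈ Finset.range (n - 1),
          qPochInt q (a r / x) (lam r - mu r) * qPochInt q (x * b r) (mu r - lam (r + 1))
            * qPochInt q q (lam r - lam (r + 1))
            / (qPochInt q q (lam r - mu r) * qPochInt q q (mu r - lam (r + 1))
                * qPochInt q (a r * b r) (lam r - lam (r + 1)))
  else 0

/-- The spin `q`-Whittaker Laurent polynomial `𝕗_λ(x_1,…,x_n | a, b)` indexed by a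
signature `λ ∈ ℤ^n`, defined through the branching rule. -/
def fpolyZ (q : ℂ) : ℕ → (ℕ → ℂ) → (ℕ → ℂ) → (ℕ → ℤ) → (ℕ → ℂ) → ℂ
  | 0, _, _, _, _ => 1
  | 1, _, _, lam, x => x 0 ^ lam 0
  | n + 2, a, b, lam, x =>
      ∑ m : Fin (n + 1) → ↥(Finset.Icc (lam (n + 1)) (lam 0)),
        fpolyZ q (n + 1) (fun i => a (i + 1)) b
            (fun i => if h : i < n + 1 then ((m ⟨i, h⟩ : ℤ)) else 0) x
          * skewfZ q (n + 2) a b lam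
              (fun i => if h : i < n + 1 then ((m ⟨i, h⟩ : ℤ)) else 0) (x (n + 1))

/-- The type of all integer partitions `𝕐` (weakly decreasing, eventually zero). -/
abbrev PartitionF : Type :=
  {lam : ℕ → ℕ // (∀ i, lam (i + 1) ≤ lam i) ∧ ∃ N, ∀ i, N ≤ i → lam i = 0}

/-- The type `𝕐_n` of partitions of length at most `n`. -/
abbrev YFin (n : ℕ) : Type :=
  {lam : ℕ → ℕ // (∀ i, lam (i + 1) ≤ lam i) ∧ ∀ i, n ≤ i → lam i = 0}

/-- Weakly decreasing tuples in `{0,…,m}^n`, i.e. partitions in `Box(m, n)`. -/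
def decFinset (n m : ℕ) : Finset (Fin n → Fin (m + 1)) :=
  Finset.univ.filter fun f => ∀ i j : Fin n, i ≤ j → f j ≤ f i

/-- Functions `(ℕ → ℂ) → ℂ` given by a symmetric polynomial in the first `n` variables. -/
def symPolyFunSet (n : ℕ) : Set ((ℕ → ℂ) → ℂ) :=
  {f | ∃ p : MvPolynomial (Fin n) ℂ, p.IsSymmetric ∧
        ∀ x : ℕ → ℂ, f x = MvPolynomial.eval (fun i : Fin n => x i) p}

open Classical in
/-- The monomial symmetric polynomial `m_μ(x_1,…,x_m)`. -/
def msym (m : ℕ) (mu : ℕ → ℕ) (x : ℕ → ℂ) : ℂ :=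
  ∑ α ∈ (Finset.univ : Finset (Fin m → Fin (mu 0 + 1))).filter
      (fun α => ∃ σ : Equiv.Perm (Fin m), ∀ i : Fin m, (α i : ℕ) = mu (σ i)),
    ∏ i : Fin m, x (i : ℕ) ^ (α i : ℕ)

/-- Reverse lexicographic order `μ ≤ λ` on partitions. -/
def RevLexLE (mu lam : ℕ → ℕ) : Prop :=
  mu = lam ∨ ∃ i, (∀ j, j < i → mu j = lam j) ∧ mu i < lam i

/-- Insert the value `0` at position `i` into the list of variables `x`. -/
def insertVar (i : ℕ) (x : ℕ → ℂ) : ℕ → ℂ :=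
  fun j => if j < i then x j else if j = i then 0 else x (j - 1)

/-- `f` is (the evaluation of) a symmetric Laurent polynomial in the first `n` variables. -/
def IsSymLaurent (n : ℕ) (f : (ℕ → ℂ) → ℂ) : Prop :=
  ∃ (N : ℕ) (p : MvPolynomial (Fin n) ℂ), p.IsSymmetric ∧
    ∀ x : ℕ → ℂ, (∀ i, i < n → x i ≠ 0) →
      f x = ((∏ i ∈ Finset.range n, x i)⁻¹) ^ N
        * MvPolynomial.eval (fun i : Fin n => x i) p

/-- Inhomogeneous symmetric Grothendieck polynomial (bialternant formula). -/
def Gpoly (n : ℕ) (b : ℕ → ℂ) (lam : ℕ → ℕ) (x : ℕ → ℂ) : ℂ :=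
  Matrix.det (Matrix.of fun i j : Fin n =>
      x (i : ℕ) ^ (lam (j : ℕ) + (n - 1 - (j : ℕ)))
        * ∏ k ∈ Finset.range (j : ℕ), (1 - x (i : ℕ) * b k))
    / Matrix.det (Matrix.of fun i j : Fin n => x (i : ℕ) ^ (n - 1 - (j : ℕ)))

/-- Dual inhomogeneous symmetric Grothendieck polynomial (bialternant formula). -/
def GbarPoly (n : ℕ) (b : ℕ → ℂ) (lam : ℕ → ℕ) (x : ℕ → ℂ) : ℂ :=
  Matrix.det (Matrix.of fun i j : Fin n =>
      x (i : ℕ) ^ lam (j : ℕ)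
        * ∏ k ∈ Finset.range (n - 1 - (j : ℕ)), (x (i : ℕ) - b (n - 2 - k)))
    / Matrix.det (Matrix.of fun i j : Fin n => x (i : ℕ) ^ (n - 1 - (j : ℕ)))

/-- The torus scalar product `⟨f | g⟩_{n,b}` for Grothendieck polynomials. -/
def sprodG (n : ℕ) (b : ℕ → ℂ) (f g : (ℕ → ℂ) → ℂ) : ℂ :=
  torusIntegral
    (fun z : Fin n → ℂ =>
      (n.factorial : ℂ)⁻¹ * f (extC z) * g (fun i => (extC z i)⁻¹)
        * (∏ i ∈ Finset.range n, ∏ j ∈ Finset.range n,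
            if i = j then 1 else 1 - extC z i / extC z j)
        * (∏ i ∈ Finset.range n, ∏ j ∈ Finset.range (n - 1), (1 - extC z i * b j))⁻¹
        * ∏ i ∈ Finset.range n, (2 * (Real.pi : ℂ) * Complex.I * extC z i)⁻¹)
    0 (fun _ => 1)

/-- The torus scalar product `⟪f | g⟫_{n,b}` for interpolation `q`-Whittaker polynomials. -/
def sprodP (q : ℂ) (n : ℕ) (b : ℕ → ℂ) (f g : (ℕ → ℂ) → ℂ) : ℂ :=
  torusIntegral
    (fun z : Fin n → ℂ =>
      (n.factorial : ℂ)⁻¹ * f (extC z) * g (fun i => (extC z i)⁻¹)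
        * (∏ i ∈ Finset.range n, ∏ j ∈ Finset.range n,
            if i = j then 1 else qPochInf q (extC z i / extC z j))
        * (∏ i ∈ Finset.range n, ∏ j ∈ Finset.range (n - 1), qPochInf q (extC z i * b j))⁻¹
        * ∏ i ∈ Finset.range n, (2 * (Real.pi : ℂ) * Complex.I * extC z i)⁻¹)
    0 (fun _ => 1)

end SpinQW

section AuxShift

lemma qPochInt_natCast (q z : ℂ) (m : ℕ) :
    qPochInt q z (m : ℤ) = ∏ i ∈ Finset.range m, (1 - z * q ^ i) := by
  simp [qPochInt]

lemma qPochInt_z_zero (q : ℂ) (k : ℤ) : qPochInt q 0 k = 1 := by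
  unfold qPochInt; split <;> simp

lemma qPochInt_zero (q z : ℂ) : qPochInt q z 0 = 1 := by simp [qPochInt]

lemma qPochq_ne_zero (q : ℂ) (hq : ‖q‖ < 1) (m : ℕ) :
    qPochInt q q (m : ℤ) ≠ 0 := by
  rw [qPochInt_natCast]
  apply Finset.prod_ne_zero_iff.mpr
  intro i _ h
  have h1 : q * q ^ i = 1 := by linear_combination -h
  have habs : ‖q‖ * ‖q‖ ^ i = 1 := by
    rw [← norm_pow, ← norm_mul, h1, norm_one]
  have h2 : ‖q‖ ^ i ≤ 1 := pow_le_one₀ (norm_nonneg q) hq.le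
  nlinarith [norm_nonneg q]

lemma big_last (q X : ℂ) (hq : ‖q‖ < 1) (a b : ℕ → ℂ) (k : ℕ) (hak : a k = 0)
    (lam mu : ℕ → ℕ) (hmuk : mu k = 0) (hlk1 : lam (k + 1) = 0) :
    qPochInt q (a k / X) ((lam k : ℤ) - (mu k : ℤ))
      * qPochInt q (X * b k) ((mu k : ℤ) - (lam (k + 1) : ℤ))
      * qPochInt q q ((lam k : ℤ) - (lam (k + 1) : ℤ))
      / (qPochInt q q ((lam k : ℤ) - (mu k : ℤ))
          * qPochInt q q ((mu k : ℤ) - (lam (k + 1) : ℤ))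
          * qPochInt q (a k * b k) ((lam k : ℤ) - (lam (k + 1) : ℤ))) = 1 := by
  rw [hak, hmuk, hlk1]
  simp only [Nat.cast_zero, sub_zero, sub_self, zero_div, zero_mul,
    qPochInt_z_zero, qPochInt_zero, one_mul, mul_one]
  exact div_self (qPochq_ne_zero q hq _)

lemma interlaces_shift_iff (k : ℕ) (lam mu : ℕ → ℕ)
    (hmono : ∀ i j, i ≤ j → lam j ≤ lam i)
    (hlam0 : ∀ i, k + 1 ≤ i → lam i = 0) (hlamk : 1 ≤ lam k)
    (hmu_pos : ∀ i, i < k → 1 ≤ mu i) (hmu0 : ∀ i, k ≤ i → mu i = 0) :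
    Interlaces mu lam ↔ Interlaces (fun i => mu i - 1) (fun i => lam i - 1) := by
  have key : ∀ i, ((mu i ≤ lam i ∧ lam (i + 1) ≤ mu i)
      ↔ (mu i - 1 ≤ lam i - 1 ∧ lam (i + 1) - 1 ≤ mu i - 1)) := by
    intro i
    rcases lt_or_ge i k with hik | hik
    · have h1 : 1 ≤ mu i := hmu_pos i hik
      have h2 : 1 ≤ lam (i + 1) := le_trans hlamk (hmono (i + 1) k hik)
      have h3 : 1 ≤ lam i := le_trans hlamk (hmono i k (le_of_lt hik))
      omega
    · have h1 : mu i = 0 := hmu0 i hik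
      have h2 : lam (i + 1) = 0 := hlam0 (i + 1) (by omega)
      omega
  exact forall_congr' key

lemma skewF_shift (q : ℂ) (hq : ‖q‖ < 1) (k : ℕ) (a b : ℕ → ℂ)
    (hak : a k = 0) (lam mu : ℕ → ℕ)
    (hmono : ∀ i j, i ≤ j → lam j ≤ lam i)
    (hlam0 : ∀ i, k + 1 ≤ i → lam i = 0) (hlamk : 1 ≤ lam k)
    (hmu_pos : ∀ i, i < k → 1 ≤ mu i) (hmu0 : ∀ i, k ≤ i → mu i = 0)
    (hI : Interlaces mu lam) (X : ℂ) :
    skewF q (k + 1) a b lam mu X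
      = X * skewF q (k + 1) a b (fun i => lam i - 1) (fun i => mu i - 1) X := by
  have hI' : Interlaces (fun i => mu i - 1) (fun i => lam i - 1) :=
    (interlaces_shift_iff k lam mu hmono hlam0 hlamk hmu_pos hmu0).mp hI
  simp only [skewF, if_pos hI, if_pos hI']
  have hE : (∑ i ∈ Finset.range (k + 1), (lam i - mu i))
      = (∑ i ∈ Finset.range (k + 1), (lam i - 1 - (mu i - 1))) + 1 := by
    rw [Finset.sum_range_succ, Finset.sum_range_succ]
    have hc : ∀ r ∈ Finset.range k, lam r - mu r = lam r - 1 - (mu r - 1) := by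
      intro r hr
      have := hmu_pos r (Finset.mem_range.mp hr)
      omega
    rw [Finset.sum_congr rfl hc]
    have h1 : mu k = 0 := hmu0 k le_rfl
    omega
  have hProd : (∏ r ∈ Finset.range (k + 1),
        (qPochInt q (a r / X) ((lam r : ℤ) - (mu r : ℤ))
          * qPochInt q (X * b r) ((mu r : ℤ) - (lam (r + 1) : ℤ))
          * qPochInt q q ((lam r : ℤ) - (lam (r + 1) : ℤ))
          / (qPochInt q q ((lam r : ℤ) - (mu r : ℤ))
              * qPochInt q q ((mu r : ℤ) - (lam (r + 1) : ℤ))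
              * qPochInt q (a r * b r) ((lam r : ℤ) - (lam (r + 1) : ℤ)))))
      = ∏ r ∈ Finset.range (k + 1),
        (qPochInt q (a r / X) (((lam r - 1 : ℕ) : ℤ) - ((mu r - 1 : ℕ) : ℤ))
          * qPochInt q (X * b r) (((mu r - 1 : ℕ) : ℤ) - ((lam (r + 1) - 1 : ℕ) : ℤ))
          * qPochInt q q (((lam r - 1 : ℕ) : ℤ) - ((lam (r + 1) - 1 : ℕ) : ℤ))
          / (qPochInt q q (((lam r - 1 : ℕ) : ℤ) - ((mu r - 1 : ℕ) : ℤ))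
              * qPochInt q q (((mu r - 1 : ℕ) : ℤ) - ((lam (r + 1) - 1 : ℕ) : ℤ))
              * qPochInt q (a r * b r) (((lam r - 1 : ℕ) : ℤ) - ((lam (r + 1) - 1 : ℕ) : ℤ)))) := by
    rw [Finset.prod_range_succ, Finset.prod_range_succ]
    congr 1
    · refine Finset.prod_congr rfl fun r hr => ?_
      have hrk := Finset.mem_range.mp hr
      have hm : 1 ≤ mu r := hmu_pos r hrk
      have hl1 : 1 ≤ lam (r + 1) := le_trans hlamk (hmono (r + 1) k hrk)
      have hl0 : 1 ≤ lam r := le_trans hlamk (hmono r k (le_of_lt hrk))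
      have e1 : (lam r : ℤ) - (mu r : ℤ) = ((lam r - 1 : ℕ) : ℤ) - ((mu r - 1 : ℕ) : ℤ) := by omega
      have e2 : (mu r : ℤ) - (lam (r + 1) : ℤ)
          = ((mu r - 1 : ℕ) : ℤ) - ((lam (r + 1) - 1 : ℕ) : ℤ) := by omega
      have e3 : (lam r : ℤ) - (lam (r + 1) : ℤ)
          = ((lam r - 1 : ℕ) : ℤ) - ((lam (r + 1) - 1 : ℕ) : ℤ) := by omega
      rw [e1, e2, e3]
    · rw [big_last q X hq a b k hak lam mu (hmu0 k le_rfl) (hlam0 (k + 1) le_rfl)]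
      have hmu' : (mu k - 1 : ℕ) = 0 := by have := hmu0 k le_rfl; omega
      have hlam' : (lam (k + 1) - 1 : ℕ) = 0 := by have := hlam0 (k + 1) le_rfl; omega
      rw [big_last q X hq a b k hak (fun i => lam i - 1) (fun i => mu i - 1) hmu' hlam']
  rw [hProd, hE, pow_succ]
  ring

lemma main_shift (q : ℂ) (hq : ‖q‖ < 1) (b x : ℕ → ℂ) :
    ∀ n : ℕ, 1 ≤ n → ∀ (a : ℕ → ℂ) (lam : ℕ → ℕ),
      a (n - 1) = 0 →
      (∀ i, lam (i + 1) ≤ lam i) →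
      (∀ i, n ≤ i → lam i = 0) →
      1 ≤ lam (n - 1) →
      Fpoly q n a b lam x
        = (∏ i ∈ Finset.range n, x i) * Fpoly q n a b (fun i => lam i - 1) x := by
  intro n
  induction n with
  | zero => intro h; omega
  | succ k ih =>
    intro _ a lam han hdec h0 hpos
    classical
    have hmono : ∀ i j, i ≤ j → lam j ≤ lam i := fun i j h =>
      antitone_nat_of_succ_le hdec h
    simp only [Nat.add_sub_cancel] at han hpos
    have hlam0pos : 1 ≤ lam 0 := le_trans hpos (hmono 0 k (Nat.zero_le k))
    rcases Nat.eq_zero_or_pos k with hk0 | hk0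
    · -- base case n = 1
      subst hk0
      have hext : ∀ (N : ℕ) (m : Fin 0 → Fin N) (i : ℕ), extN m i = 0 := by
        intro N m i; simp [extN]
      have eval : ∀ (L : ℕ → ℕ), (∀ i, 1 ≤ i → L i = 0) →
          ∀ (m : Fin 0 → Fin (L 0 + 1)),
            skewF q (0 + 1) a b L (extN m) (x 0) = (x 0) ^ (L 0) := by
        intro L hL m
        have hI : Interlaces (extN m) L := fun i =>
          ⟨by rw [hext]; exact Nat.zero_le _, by rw [hext, hL (i + 1) (by omega)]⟩
        simp only [skewF, if_pos hI]
        rw [Finset.sum_range_one, Finset.prod_range_one,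
          big_last q (x 0) hq a b 0 han L (extN m) (hext _ m 0) (hL 1 le_rfl),
          hext _ m 0, mul_one, Nat.sub_zero]
      simp only [Fpoly]
      rw [Fintype.sum_unique, Fintype.sum_unique]
      simp only [hext]
      rw [if_pos (fun _ => trivial : ℕ → True), one_mul, one_mul,
        eval lam (fun i hi => h0 i hi),
        eval (fun i => lam i - 1) (fun i hi => by show lam i - 1 = 0; rw [h0 i hi]),
        Finset.prod_range_one, ← pow_succ']
      congr 1
      omega
    · -- inductive step, k ≥ 1
      simp only [Fpoly]
      have hmu0 : ∀ (m : Fin k → Fin (lam 0 + 1)) i, k ≤ i → extN m i = 0 := by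
        intro m i hi
        simp only [extN]
        rw [dif_neg (by omega)]
      set P : (Fin k → Fin (lam 0 + 1)) → Prop := fun m => ∀ i : Fin k, 1 ≤ (m i : ℕ)
        with hP_def
      have hvan : ∀ m ∈ (Finset.univ : Finset (Fin k → Fin (lam 0 + 1))),
          (Fpoly q k (fun i => a (i + 1)) b (extN m) x
            * skewF q (k + 1) a b lam (extN m) (x k)) ≠ 0 → P m := by
        intro m _ hne
        by_contra hP
        have hex : ∃ i : Fin k, (m i : ℕ) = 0 := by
          by_contra hc
          push_neg at hc
          exact hP (fun i => by have := hc i; omega)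
        obtain ⟨i, hi⟩ := hex
        apply hne
        have hnI : ¬ Interlaces (extN m) lam := by
          intro hInt
          have h1 := (hInt i.1).2
          have h2 : extN m i.1 = (m i : ℕ) := by
            simp only [extN]
            rw [dif_pos i.2]
          have h3 : 1 ≤ lam (i.1 + 1) := le_trans hpos (hmono (i.1 + 1) k i.2)
          omega
        rw [skewF, if_neg hnI, mul_zero]
      rw [← Finset.sum_filter_of_ne hvan, Finset.mul_sum]
      have hd : ∀ (m : Fin k → Fin (lam 0 + 1)) (i : Fin k),
          (m i : ℕ) - 1 < lam 0 - 1 + 1 := by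
        intro m i
        have := (m i).isLt
        omega
      have he : ∀ (m : Fin k → Fin (lam 0 - 1 + 1)) (i : Fin k),
          (m i : ℕ) + 1 < lam 0 + 1 := by
        intro m i
        have := (m i).isLt
        omega
      refine Finset.sum_nbij' (fun m i => (⟨(m i : ℕ) - 1, hd m i⟩ : Fin (lam 0 - 1 + 1)))
        (fun m i => (⟨(m i : ℕ) + 1, he m i⟩ : Fin (lam 0 + 1)))
        (fun m _ => Finset.mem_univ _)
        (fun m _ => Finset.mem_filter.mpr ⟨Finset.mem_univ _, fun i => by simp⟩)
        (fun m hm => ?_) (fun m _ => ?_) (fun m hm => ?_)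
      · have hP : P m := (Finset.mem_filter.mp hm).2
        funext i
        exact Fin.ext (by have := hP i; simp; omega)
      · funext i
        exact Fin.ext (by simp)
      · -- main pointwise identity
        have hP : P m := (Finset.mem_filter.mp hm).2
        have hmu_pos : ∀ i, i < k → 1 ≤ extN m i := by
          intro i hik
          simp only [extN]
          rw [dif_pos hik]
          exact hP _
        have hext : extN (fun i => (⟨(m i : ℕ) - 1, hd m i⟩ : Fin (lam 0 - 1 + 1)))
            = fun i => extN m i - 1 := by
          funext i
          simp only [extN]
          by_cases h : i < k
          · rw [dif_pos h, dif_pos h]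
          · rw [dif_neg h, dif_neg h]
        by_cases hI : Interlaces (extN m) lam
        · have hF := ih hk0 (fun i => a (i + 1)) (extN m)
            (by show a (k - 1 + 1) = 0; rw [Nat.sub_add_cancel hk0]; exact han)
            (fun i => le_trans (hI (i + 1)).1 (hI i).2)
            (hmu0 m) ?_
          · have hS := skewF_shift q hq k a b han lam (extN m) hmono h0 hpos
              hmu_pos (hmu0 m) hI (x k)
            rw [hF, hS, hext, Finset.prod_range_succ]
            ring
          · simp only [extN]
            rw [dif_pos (by omega : k - 1 < k)]
            exact hP _
        · have hnI' : ¬ Interlaces (extN (fun i => (⟨(m i : ℕ) - 1, hd m i⟩ :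
              Fin (lam 0 - 1 + 1)))) (fun i => lam i - 1) := by
            rw [hext]
            intro h
            exact hI ((interlaces_shift_iff k lam (extN m) hmono h0 hpos
              hmu_pos (hmu0 m)).mpr h)
          rw [skewF, if_neg hI, skewF, if_neg hnI']
          ring

end AuxShift

/-- shift property of the spin `q`-Whittaker polynomials. -/
theorem fpoly_shift_property
    (n : ℕ) (hn : 1 ≤ n) (q : ℂ) (hq : ‖q‖ < 1)
    (a b : ℕ → ℂ)
    (ha : ∀ i, i < n - 1 → ‖a i‖ < 1)
    (hb : ∀ i, i < n - 1 → ‖b i‖ < 1)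
    (lam : ℕ → ℕ)
    (hlam : ∀ i, lam (i + 1) ≤ lam i) (hlam0 : ∀ i, n ≤ i → lam i = 0)
    (hpos : 0 < lam (n - 1)) (x : ℕ → ℂ) :
    fpoly q n a b lam x
      = (∏ i ∈ Finset.range n, x i) * fpoly q n a b (fun i => lam i - 1) x := by
  unfold fpoly
  exact main_shift q hq b x n hn _ lam (by simp) hlam hlam0 hpos
end

section
/- Fix n ≥ 1, a complex parameter q with |q| < 1, and inhomogeneity parameters a_1,…,a_{n-1}, b_1,…,b_{n-1} ∈ ℂ with |a_i| < 1 and |b_i| < 1 for all i. For every signature λ = (λ_1 ≥ ⋯ ≥ λ_n) ∈ ℤ^n one has 𝕗_λ(x_1,…,x_n | a_1,…,a_{n-1}, b_1,…,b_{n-1}) = 𝕗_{λ^rev}(x_1^{-1},…,x_n^{-1} | b_{n-1},…,b_1, a_{n-1},…,a_1), where λ^rev = (−λ_n ≥ ⋯ ≥ −λ_1). -/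
open scoped BigOperators

noncomputable section SpinQW

-- congruence for skewfZ
lemma skewfZ_congr (q : ℂ) (N : ℕ) (a a' b b' : ℕ → ℂ) (lam lam' mu mu' : ℕ → ℤ) (x x' : ℂ)
    (ha : ∀ i, i < N - 1 → a i = a' i) (hb : ∀ i, i < N - 1 → b i = b' i)
    (hlam : ∀ i, i < N → lam i = lam' i) (hmu : ∀ i, i < N - 1 → mu i = mu' i)
    (hx : x = x') :
    skewfZ q N a b lam mu x = skewfZ q N a' b' lam' mu' x' := by
  subst hx
  unfold skewfZ
  have hc : (∀ i, i < N - 1 → mu i ≤ lam i ∧ lam (i + 1) ≤ mu i)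
      ↔ (∀ i, i < N - 1 → mu' i ≤ lam' i ∧ lam' (i + 1) ≤ mu' i) :=
    forall_congr' fun i => imp_congr_right fun hi => by
      rw [hmu i hi, hlam i (by omega), hlam (i + 1) (by omega)]
  rw [if_congr hc ?_ rfl]
  congr 1
  · congr 1
    congr 1
    · exact Finset.sum_congr rfl fun i hi => hlam i (Finset.mem_range.mp hi)
    · exact Finset.sum_congr rfl fun i hi => hmu i (Finset.mem_range.mp hi)
  · refine Finset.prod_congr rfl fun r hr => ?_
    have hr' := Finset.mem_range.mp hr
    rw [ha r hr', hb r hr', hmu r hr', hlam r (by omega), hlam (r + 1) (by omega)]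

lemma skewfZ_rev (q : ℂ) (n : ℕ) (a b : ℕ → ℂ) (lam mu : ℕ → ℤ) (x : ℂ) :
    skewfZ q (n + 2) a b lam mu x
      = skewfZ q (n + 2) (fun i => b (n - i)) (fun i => a (n - i))
          (fun i => -lam (n + 1 - i)) (fun i => -mu (n - i)) x⁻¹ := by
  unfold skewfZ
  have h21 : n + 2 - 1 = n + 1 := by omega
  rw [h21]
  have hc : (∀ i, i < n + 1 → mu i ≤ lam i ∧ lam (i + 1) ≤ mu i)
      ↔ (∀ i, i < n + 1 → -mu (n - i) ≤ -lam (n + 1 - i)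
          ∧ -lam (n + 1 - (i + 1)) ≤ -mu (n - i)) := by
    constructor
    · intro h i hi
      have h2 := h (n - i) (by omega)
      have e1 : n + 1 - i = (n - i) + 1 := by omega
      have e2 : n + 1 - (i + 1) = n - i := by omega
      rw [e1, e2]
      omega
    · intro h i hi
      have h2 := h (n - i) (by omega)
      have e1 : n + 1 - (n - i) = i + 1 := by omega
      have e2 : n + 1 - (n - i + 1) = i := by omega
      have e3 : n - (n - i) = i := by omega
      rw [e1, e2, e3] at h2
      omega
  rw [if_congr hc rfl rfl]
  split_ifs with h
  · -- body equality
    have hS : ((∑ i ∈ Finset.range (n + 2), -lam (n + 1 - i))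
        - ∑ i ∈ Finset.range (n + 1), -mu (n - i))
        = -(((∑ i ∈ Finset.range (n + 2), lam i) - ∑ i ∈ Finset.range (n + 1), mu i)) := by
      have r1 : ∑ i ∈ Finset.range (n + 2), -lam (n + 1 - i)
          = ∑ i ∈ Finset.range (n + 2), -lam i := by
        have := Finset.sum_range_reflect (fun i => -lam i) (n + 2)
        simpa [show ∀ i, n + 2 - 1 - i = n + 1 - i from fun i => by omega] using this
      have r2 : ∑ i ∈ Finset.range (n + 1), -mu (n - i)
          = ∑ i ∈ Finset.range (n + 1), -mu i := by
        have := Finset.sum_range_reflect (fun i => -mu i) (n + 1)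
        simpa [show ∀ i, n + 1 - 1 - i = n - i from fun i => by omega] using this
      rw [r1, r2, Finset.sum_neg_distrib, Finset.sum_neg_distrib]
      ring
    rw [hS]
    have hP : (∏ r ∈ Finset.range (n + 1),
        qPochInt q (b (n - r) / x⁻¹) (-lam (n + 1 - r) - -mu (n - r))
          * qPochInt q (x⁻¹ * a (n - r)) (-mu (n - r) - -lam (n + 1 - (r + 1)))
          * qPochInt q q (-lam (n + 1 - r) - -lam (n + 1 - (r + 1)))
          / (qPochInt q q (-lam (n + 1 - r) - -mu (n - r))
              * qPochInt q q (-mu (n - r) - -lam (n + 1 - (r + 1)))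
              * qPochInt q (b (n - r) * a (n - r)) (-lam (n + 1 - r) - -lam (n + 1 - (r + 1)))))
        = ∏ r ∈ Finset.range (n + 1),
            qPochInt q (a r / x) (lam r - mu r) * qPochInt q (x * b r) (mu r - lam (r + 1))
              * qPochInt q q (lam r - lam (r + 1))
              / (qPochInt q q (lam r - mu r) * qPochInt q q (mu r - lam (r + 1))
                  * qPochInt q (a r * b r) (lam r - lam (r + 1))) := by
      rw [← Finset.prod_range_reflect (fun r =>
          qPochInt q (a r / x) (lam r - mu r) * qPochInt q (x * b r) (mu r - lam (r + 1))
            * qPochInt q q (lam r - lam (r + 1))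
            / (qPochInt q q (lam r - mu r) * qPochInt q q (mu r - lam (r + 1))
                * qPochInt q (a r * b r) (lam r - lam (r + 1)))) (n + 1)]
      refine Finset.prod_congr rfl fun r hr => ?_
      have hr' := Finset.mem_range.mp hr
      have e1 : n + 1 - r = (n - r) + 1 := by omega
      have e2 : n + 1 - (r + 1) = n - r := by omega
      have e3 : n + 1 - 1 - r = n - r := by omega
      rw [e1, e2, e3]
      have d1 : b (n - r) / x⁻¹ = x * b (n - r) := by
        rw [div_eq_mul_inv, inv_inv, mul_comm]
      have d2 : x⁻¹ * a (n - r) = a (n - r) / x := by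
        rw [div_eq_mul_inv, mul_comm]
      rw [d1, d2]
      have i1 : -lam (n - r + 1) - -mu (n - r) = mu (n - r) - lam (n - r + 1) := by ring
      have i2 : -mu (n - r) - -lam (n - r) = lam (n - r) - mu (n - r) := by ring
      have i3 : -lam (n - r + 1) - -lam (n - r) = lam (n - r) - lam (n - r + 1) := by ring
      rw [i1, i2, i3]
      ring
    rw [hP]
    congr 1
    rw [zpow_neg, inv_zpow, inv_inv]
  · rfl

lemma fpolyZ_congr (q : ℂ) (N : ℕ) : ∀ (a a' b b' : ℕ → ℂ) (lam lam' : ℕ → ℤ) (x x' : ℕ → ℂ),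
    (∀ i, i < N - 1 → a i = a' i) → (∀ i, i < N - 1 → b i = b' i) →
    (∀ i, i < N → lam i = lam' i) → (∀ i, i < N → x i = x' i) →
    fpolyZ q N a b lam x = fpolyZ q N a' b' lam' x' := by
  induction N using Nat.twoStepInduction with
  | zero => intro _ _ _ _ _ _ _ _ _ _ _ _; rfl
  | one =>
    intro a a' b b' lam lam' x x' _ _ hlam hx
    show x 0 ^ lam 0 = x' 0 ^ lam' 0
    rw [hlam 0 (by omega), hx 0 (by omega)]
  | more n _ IH =>
    intro a a' b b' lam lam' x x' ha hb hlam hx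
    show fpolyZ q (n + 2) a b lam x = fpolyZ q (n + 2) a' b' lam' x'
    rw [fpolyZ, fpolyZ]
    rw [show lam (n + 1) = lam' (n + 1) from hlam (n + 1) (by omega),
        show lam 0 = lam' 0 from hlam 0 (by omega)]
    refine Finset.sum_congr rfl fun m _ => ?_
    refine congrArg₂ (· * ·) ?_ ?_
    · exact IH (fun i => a (i + 1)) (fun i => a' (i + 1)) b b' _ _ x x'
        (fun i hi => ha (i + 1) (by omega)) (fun i hi => hb i (by omega))
        (fun i hi => rfl) (fun i hi => hx i (by omega))
    · exact skewfZ_congr q (n + 2) a a' b b' lam lam' _ _ _ _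
        (fun i hi => ha i (by omega)) (fun i hi => hb i (by omega))
        hlam (fun i hi => rfl) (hx (n + 1) (by omega))

/-- Negation equivalence between integer interval subtypes. -/
def negIccEquiv (α β : ℤ) : ↥(Finset.Icc α β) ≃ ↥(Finset.Icc (-β) (-α)) where
  toFun v := ⟨-(v : ℤ), by
    have := v.2; simp only [Finset.mem_Icc] at this ⊢; omega⟩
  invFun v := ⟨-(v : ℤ), by
    have := v.2; simp only [Finset.mem_Icc] at this ⊢; omega⟩
  left_inv v := by simp
  right_inv v := by simp

lemma fpolyZ_rev (q : ℂ) (N : ℕ) : ∀ (a b : ℕ → ℂ) (lam : ℕ → ℤ) (x : ℕ → ℂ),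
    fpolyZ q N a b lam x
      = fpolyZ q N (fun i => b (N - 2 - i)) (fun i => a (N - 2 - i))
          (fun i => -lam (N - 1 - i)) (fun i => (x i)⁻¹) := by
  induction N using Nat.twoStepInduction with
  | zero => intro a b lam x; rfl
  | one =>
    intro a b lam x
    show x 0 ^ lam 0 = (x 0)⁻¹ ^ (-lam (1 - 1 - 0))
    rw [zpow_neg, inv_zpow, inv_inv]
  | more n _ IH =>
    intro a b lam x
    rw [fpolyZ, fpolyZ]
    have eA : ∀ i : ℕ, n + 2 - 2 - i = n - i := fun i => by omega
    have eL : ∀ i : ℕ, n + 2 - 1 - i = n + 1 - i := fun i => by omega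
    simp only [eA, eL]
    rw [show n + 2 - 1 - (n + 1) = 0 from by omega,
        show n + 2 - 1 - 0 = n + 1 from by omega]
    refine Fintype.sum_equiv
      ((Fin.revPerm (n := n + 1)).arrowCongr (negIccEquiv (lam (n + 1)) (lam 0))) _ _
      (fun m => ?_)
    set mu : ℕ → ℤ := fun i => if h : i < n + 1 then ((m ⟨i, h⟩ : ℤ)) else 0 with hmu
    have hmu' : ∀ i : ℕ, (h : i < n + 1) →
        (if h : i < n + 1 then
            ((((Fin.revPerm (n := n + 1)).arrowCongr
                (negIccEquiv (lam (n + 1)) (lam 0))) m ⟨i, h⟩ : ℤ))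
          else 0) = -mu (n - i) := by
      intro i h
      have hlt : n - i < n + 1 := by omega
      have h1 : (if h : i < n + 1 then
            ((((Fin.revPerm (n := n + 1)).arrowCongr
                (negIccEquiv (lam (n + 1)) (lam 0))) m ⟨i, h⟩ : ℤ))
          else 0) = -(m ((⟨i, h⟩ : Fin (n + 1)).rev) : ℤ) := by rw [dif_pos h]; rfl
      have h2 : mu (n - i) = (m ⟨n - i, hlt⟩ : ℤ) := by
        simp only [hmu, dif_pos hlt]
      rw [h1, h2, show (⟨i, h⟩ : Fin (n + 1)).rev = ⟨n - i, hlt⟩ from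
        Fin.ext (by simp only [Fin.val_rev, Fin.val_mk]; omega)]
    refine congrArg₂ (· * ·) ?_ ?_
    · -- first factor
      rw [IH (fun i => a (i + 1)) b mu x]
      refine fpolyZ_congr q (n + 1) _ _ _ _ _ _ _ _ ?_ ?_ ?_ (fun i hi => rfl)
      · intro i hi
        show b (n + 1 - 2 - i) = b (n - (i + 1))
        congr 1
        omega
      · intro i hi
        show a (n + 1 - 2 - i + 1) = a (n - i)
        congr 1
        omega
      · intro i hi
        rw [show n + 1 - 1 - i = n - i from by omega]
        exact (hmu' i hi).symm
    · -- second factor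
      rw [skewfZ_rev q n a b lam mu (x (n + 1))]
      exact skewfZ_congr q (n + 2) _ _ _ _ _ _ _ _ _ _
        (fun i hi => rfl) (fun i hi => rfl) (fun i hi => rfl)
        (fun i hi => (hmu' i (by omega)).symm) rfl

end SpinQW

/-- reverse symmetry of the spin `q`-Whittaker Laurent polynomials
indexed by signatures. -/
theorem fpolyZ_reverse_symmetry
    (n : ℕ) (hn : 1 ≤ n) (q : ℂ) (hq : ‖q‖ < 1)
    (a b : ℕ → ℂ)
    (ha : ∀ i, i < n - 1 → ‖a i‖ < 1)
    (hb : ∀ i, i < n - 1 → ‖b i‖ < 1)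
    (lam : ℕ → ℤ) (hlam : ∀ i, i + 1 < n → lam (i + 1) ≤ lam i)
    (x : ℕ → ℂ) (hx : ∀ i, i < n → x i ≠ 0) :
    fpolyZ q n a b lam x
      = fpolyZ q n (fun i => b (n - 2 - i)) (fun i => a (n - 2 - i))
          (fun i => -lam (n - 1 - i)) (fun i => (x i)⁻¹) :=
  fpolyZ_rev q n a b lam x
end
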